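/- Let A be an integral domain and a a nonzero element of A. A subring R with A ⊆ R ⊆ A[a⁻¹] exists if and only if R = ⋃_{n≥0} a⁻ⁿ·Iₙ for some a-filtration (Iₙ) of A, i.e., a descending chain A = I₀ ⊇ I₁ ⊇ I₂ ⊇ ⋯ of ideals with Iₙ·Iₘ ⊆ I_{n+m} and a·Iₙ ⊆ I_{n+1} for all n, m. -/

import Mathlib

/-- Let `A` be an integral domain and `a` a nonzero element of `A`.
A subset `R` of `A[a⁻¹]` is a subring with `A ⊆ R ⊆ A[a⁻¹]` if and only if
`R = ⋃_{n≥0} a⁻ⁿ·Iₙ` for some `a`-filtration `(Iₙ)` of `A`. -/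
theorem statement0 {A : Type*} [CommRing A] [IsDomain A] (a : A) (ha : a ≠ 0)
    (R : Set (Localization.Away a)) :
    (∃ S : Subalgebra A (Localization.Away a), (S : Set (Localization.Away a)) = R) ↔
    (∃ I : ℕ → Ideal A,
      I 0 = ⊤ ∧
      (∀ n, I (n + 1) ≤ I n) ∧
      (∀ n m, I n * I m ≤ I (n + m)) ∧
      (∀ n, ∀ x ∈ I n, a * x ∈ I (n + 1)) ∧
      R = {x | ∃ n : ℕ, ∃ y ∈ I n,
        (algebraMap A (Localization.Away a) a) ^ n * x =
          algebraMap A (Localization.Away a) y}) := by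
  set f := algebraMap A (Localization.Away a) with hf
  constructor
  · rintro ⟨S, rfl⟩
    have hu : IsUnit (f a) :=
      IsLocalization.map_units (M := Submonoid.powers a) _ ⟨a, Submonoid.mem_powers a⟩
    refine ⟨fun n =>
      { carrier := {y | ∃ x ∈ S, f a ^ n * x = f y}
        add_mem' := by
          rintro y z ⟨x, hx, hxe⟩ ⟨w, hw, hwe⟩
          exact ⟨x + w, S.add_mem hx hw, by rw [mul_add, hxe, hwe, map_add]⟩
        zero_mem' := ⟨0, S.zero_mem, by simp⟩
        smul_mem' := by
          rintro c y ⟨x, hx, hxe⟩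
          refine ⟨f c * x, S.mul_mem (S.algebraMap_mem c) hx, ?_⟩
          rw [smul_eq_mul, map_mul, ← hxe]; ring }, ?_, ?_, ?_, ?_, ?_⟩
    · refine eq_top_iff.mpr fun y _ => ⟨f y, S.algebraMap_mem y, by simp⟩
    · rintro n y ⟨x, hx, he⟩
      refine ⟨f a * x, S.mul_mem (S.algebraMap_mem a) hx, ?_⟩
      rw [← he, pow_succ]; ring
    · intro n m
      refine Ideal.mul_le.mpr fun y hy z hz => ?_
      obtain ⟨x, hx, he⟩ := hy
      obtain ⟨w, hw, he'⟩ := hz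
      exact ⟨x * w, S.mul_mem hx hw, by rw [map_mul, ← he, ← he']; ring⟩
    · rintro n y ⟨x, hx, he⟩
      exact ⟨x, hx, by rw [map_mul, ← he, pow_succ]; ring⟩
    · ext x
      constructor
      · intro hx
        obtain ⟨⟨r, s⟩, hs⟩ := IsLocalization.surj (Submonoid.powers a) x
        obtain ⟨n, hn⟩ := s.2
        have he : f a ^ n * x = f r := by
          rw [← map_pow, show a ^ n = (s : A) from hn, mul_comm]; exact hs
        exact ⟨n, r, ⟨x, hx, he⟩, he⟩
      · rintro ⟨n, y, ⟨x', hx', he'⟩, he⟩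
        have : x' = x := (hu.pow n).mul_left_cancel (he'.trans he.symm)
        exact this ▸ hx'
  · rintro ⟨I, h0, hdesc, hmul, haI, rfl⟩
    have key : ∀ m n y, y ∈ I n → a ^ m * y ∈ I (n + m) := by
      intro m
      induction m with
      | zero => intro n y hy; simpa using hy
      | succ m ih =>
        intro n y hy
        have h1 : a ^ (m + 1) * y = a * (a ^ m * y) := by ring
        rw [h1]
        exact haI (n + m) _ (ih n y hy)
    refine ⟨
      { carrier := {x | ∃ n, ∃ y ∈ I n, f a ^ n * x = f y}
        one_mem' := ⟨0, 1, by simp [h0], by simp⟩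
        zero_mem' := ⟨0, 0, by simp [h0], by simp⟩
        mul_mem' := by
          rintro x x' ⟨n, y, hy, he⟩ ⟨m, z, hz, he'⟩
          exact ⟨n + m, y * z, hmul n m (Ideal.mul_mem_mul hy hz),
            by rw [map_mul, ← he, ← he']; ring⟩
        add_mem' := by
          rintro x x' ⟨n, y, hy, he⟩ ⟨m, z, hz, he'⟩
          refine ⟨n + m, a ^ m * y + a ^ n * z,
            add_mem (key m n y hy) (by rw [Nat.add_comm]; exact key n m z hz), ?_⟩
          rw [map_add, map_mul, map_mul, map_pow, map_pow, ← he, ← he']; ring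
        algebraMap_mem' := fun c => ⟨0, c, by simp [h0], by simp [hf]⟩ }, rfl⟩
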